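/- There exist states ρ, ω ∈ M₂(ℂ) (namely ρ = (1/2)(I + σ_z/2), ω = (1/2)(I − σ_z/2)) and p ≥ 1 such that the minimum of the linearized multi-marginal transport problem is strictly smaller than the minimum of the product-coupling problem: specifically, min over Π₁,Π₂,Π₃ ∈ C(ρ,ω) of ∑_{k=1}^3 tr(Π_k |σ_k⊗I − I⊗σ_kᵀ|^p) = 2^p − ((√3 − 1)/2)·2^p < 2^p = min over Π ∈ C(ρ,ω) of tr(Π ∑_{k=1}^3 |σ_k⊗I − I⊗σ_kᵀ|^p). -/

import Mathlib

open Matrix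
open scoped ComplexOrder

noncomputable section

/-- Partial trace over the second tensor factor of `M₄(ℂ) ≅ M₂(ℂ) ⊗ M₂(ℂ)`
(index ordering `(i,k) ↦ 2*i + k`). -/
def ptrace2 (A : Matrix (Fin 4) (Fin 4) ℂ) : Matrix (Fin 2) (Fin 2) ℂ :=
  !![A 0 0 + A 1 1, A 0 2 + A 1 3; A 2 0 + A 3 1, A 2 2 + A 3 3]

/-- Partial trace over the first tensor factor. -/
def ptrace1 (A : Matrix (Fin 4) (Fin 4) ℂ) : Matrix (Fin 2) (Fin 2) ℂ :=
  !![A 0 0 + A 2 2, A 0 1 + A 2 3; A 1 0 + A 3 2, A 1 1 + A 3 3]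

/-- Kronecker product `M₂(ℂ) × M₂(ℂ) → M₄(ℂ)` with index ordering `(i,k) ↦ 2*i + k`. -/
def kron (A B : Matrix (Fin 2) (Fin 2) ℂ) : Matrix (Fin 4) (Fin 4) ℂ :=
  !![A 0 0 * B 0 0, A 0 0 * B 0 1, A 0 1 * B 0 0, A 0 1 * B 0 1;
     A 0 0 * B 1 0, A 0 0 * B 1 1, A 0 1 * B 1 0, A 0 1 * B 1 1;
     A 1 0 * B 0 0, A 1 0 * B 0 1, A 1 1 * B 0 0, A 1 1 * B 0 1;
     A 1 0 * B 1 0, A 1 0 * B 1 1, A 1 1 * B 1 0, A 1 1 * B 1 1]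

def σx : Matrix (Fin 2) (Fin 2) ℂ := !![0, 1; 1, 0]
def σy : Matrix (Fin 2) (Fin 2) ℂ := !![0, -Complex.I; Complex.I, 0]
def σz : Matrix (Fin 2) (Fin 2) ℂ := !![1, 0; 0, -1]

/-- The symmetric cost operator `C_{symm,p}`. -/
def Csymm (p : ℝ) : Matrix (Fin 4) (Fin 4) ℂ :=
  !![(((2:ℝ)^p : ℝ) : ℂ), 0, 0, -(((2:ℝ)^p : ℝ) : ℂ);
     0, (((2:ℝ)^(p+1) : ℝ) : ℂ), 0, 0;
     0, 0, (((2:ℝ)^(p+1) : ℝ) : ℂ), 0;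
     -(((2:ℝ)^p : ℝ) : ℂ), 0, 0, (((2:ℝ)^p : ℝ) : ℂ)]

/-- The single-observable cost operator `C_{z,p} = diag(0, 2^p, 2^p, 0)`. -/
def Cz (p : ℝ) : Matrix (Fin 4) (Fin 4) ℂ :=
  !![0, 0, 0, 0;
     0, (((2:ℝ)^p : ℝ) : ℂ), 0, 0;
     0, 0, (((2:ℝ)^p : ℝ) : ℂ), 0;
     0, 0, 0, 0]

/-- `Π` is a coupling of `ρ` and `ω`. -/
def IsCoupling (P : Matrix (Fin 4) (Fin 4) ℂ) (ρ ω : Matrix (Fin 2) (Fin 2) ℂ) : Prop :=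
  P.PosSemidef ∧ P.trace = 1 ∧ ptrace2 P = ω ∧ ptrace1 P = ρᵀ

/-! ### Auxiliary material for `stmt_18` -/

private lemma st18_sq3 : Real.sqrt 3 * Real.sqrt 3 = 3 :=
  Real.mul_self_sqrt (by norm_num)

private lemma st18_sq3' : (Real.sqrt 3 : ℂ) * (Real.sqrt 3 : ℂ) = 3 := by
  rw [← Complex.ofReal_mul, st18_sq3]; norm_num

private lemma st18_sqrt3_le_two : Real.sqrt 3 ≤ 2 := by
  nlinarith [st18_sq3, Real.sqrt_nonneg 3]

private lemma st18_one_lt_sqrt3 : 1 < Real.sqrt 3 := by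
  nlinarith [st18_sq3, Real.sqrt_nonneg 3]

/-- PSD bound on the `(0,3)` entry. -/
private lemma st18_bound03 {P : Matrix (Fin 4) (Fin 4) ℂ} (hP : P.PosSemidef) :
    ((P 0 3).re)^2 ≤ (P 0 0).re * (P 3 3).re := by
  have herm : P 3 0 = (starRingEnd ℂ) (P 0 3) := by
    have h := congrFun (congrFun hP.1 3) 0
    simpa [conjTranspose_apply] using h.symm
  have key : ∀ s : ℝ, 0 ≤ (P 0 0).re * (s * s) + (2 * (P 0 3).re) * s + (P 3 3).re := by
    intro s
    have h := hP.dotProduct_mulVec_nonneg ![(s:ℂ), 0, 0, 1]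
    rw [Complex.le_def] at h
    have h1 := h.1
    simp [dotProduct, mulVec, Fin.sum_univ_four, herm, Complex.add_re, Complex.mul_re,
      Complex.ofReal_re, Complex.ofReal_im, Complex.conj_re, Complex.conj_im] at h1
    nlinarith [h1]
  have hd := discrim_le_zero key
  simp only [discrim] at hd
  nlinarith [hd]

/-- PSD bound on the `(1,2)` entry. -/
private lemma st18_bound12 {P : Matrix (Fin 4) (Fin 4) ℂ} (hP : P.PosSemidef) :
    ((P 1 2).re)^2 ≤ (P 1 1).re * (P 2 2).re := by
  have herm : P 2 1 = (starRingEnd ℂ) (P 1 2) := by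
    have h := congrFun (congrFun hP.1 2) 1
    simpa [conjTranspose_apply] using h.symm
  have key : ∀ s : ℝ, 0 ≤ (P 1 1).re * (s * s) + (2 * (P 1 2).re) * s + (P 2 2).re := by
    intro s
    have h := hP.dotProduct_mulVec_nonneg ![0, (s:ℂ), 1, 0]
    rw [Complex.le_def] at h
    have h1 := h.1
    simp [dotProduct, mulVec, Fin.sum_univ_four, herm, Complex.add_re, Complex.mul_re,
      Complex.ofReal_re, Complex.ofReal_im, Complex.conj_re, Complex.conj_im] at h1
    nlinarith [h1]
  have hd := discrim_le_zero key
  simp only [discrim] at hd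
  nlinarith [hd]

private lemma st18_diag_nonneg {P : Matrix (Fin 4) (Fin 4) ℂ} (hP : P.PosSemidef) (i : Fin 4) :
    0 ≤ (P i i).re := by
  fin_cases i
  · have h := hP.dotProduct_mulVec_nonneg ![1, 0, 0, 0]
    rw [Complex.le_def] at h
    simpa [dotProduct, mulVec, Fin.sum_univ_four] using h.1
  · have h := hP.dotProduct_mulVec_nonneg ![0, 1, 0, 0]
    rw [Complex.le_def] at h
    simpa [dotProduct, mulVec, Fin.sum_univ_four] using h.1
  · have h := hP.dotProduct_mulVec_nonneg ![0, 0, 1, 0]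
    rw [Complex.le_def] at h
    simpa [dotProduct, mulVec, Fin.sum_univ_four] using h.1
  · have h := hP.dotProduct_mulVec_nonneg ![0, 0, 0, 1]
    rw [Complex.le_def] at h
    simpa [dotProduct, mulVec, Fin.sum_univ_four] using h.1

/-- All the facts we need about a coupling of the two fixed states. -/
private lemma st18_facts {P : Matrix (Fin 4) (Fin 4) ℂ}
    (h : IsCoupling P ((1/2 : ℂ) • ((1 : Matrix (Fin 2) (Fin 2) ℂ) + (1/2 : ℂ) • σz))
                      ((1/2 : ℂ) • ((1 : Matrix (Fin 2) (Fin 2) ℂ) - (1/2 : ℂ) • σz))) :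
    0 ≤ (P 0 0).re ∧ 0 ≤ (P 1 1).re ∧ 0 ≤ (P 2 2).re ∧
    (P 0 0).re + (P 1 1).re = 1/4 ∧ (P 0 0).re + (P 2 2).re = 3/4 ∧
    (P 3 3).re = (P 0 0).re ∧
    (P 3 0).re = (P 0 3).re ∧ (P 2 1).re = (P 1 2).re ∧
    ((P 0 3).re)^2 ≤ (P 0 0).re * (P 3 3).re ∧
    ((P 1 2).re)^2 ≤ (P 1 1).re * (P 2 2).re := by
  obtain ⟨hpsd, htr, h2, h1⟩ := h
  have e2 := congrFun (congrFun h2 0) 0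
  have e1 := congrFun (congrFun h1 1) 1
  have e1' := congrFun (congrFun h1 0) 0
  simp [ptrace2, ptrace1, σz, Matrix.one_apply, Matrix.vecHead, Matrix.vecTail] at e2 e1 e1'
  have r2 := congrArg Complex.re e2
  have r1 := congrArg Complex.re e1
  have r1' := congrArg Complex.re e1'
  simp [Complex.add_re] at r2 r1 r1'
  have herm30 : P 3 0 = (starRingEnd ℂ) (P 0 3) := by
    have hh := congrFun (congrFun hpsd.1 3) 0
    simpa [conjTranspose_apply] using hh.symm
  have herm21 : P 2 1 = (starRingEnd ℂ) (P 1 2) := by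
    have hh := congrFun (congrFun hpsd.1 2) 1
    simpa [conjTranspose_apply] using hh.symm
  refine ⟨st18_diag_nonneg hpsd 0, st18_diag_nonneg hpsd 1, st18_diag_nonneg hpsd 2,
    by linarith, by linarith, by linarith,
    by rw [herm30]; simp, by rw [herm21]; simp,
    st18_bound03 hpsd, st18_bound12 hpsd⟩

/-- The elementary real-arithmetic bound behind the single-direction minima. -/
private lemma st18_key_bound {a b c u v : ℝ} (ha : 0 ≤ a) (hb : 0 ≤ b) (hc : 0 ≤ c)
    (hab : a + b = 1/4) (hac : a + c = 3/4) (hu : u^2 ≤ a * a) (hv : v^2 ≤ b * c) :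
    u + v ≤ Real.sqrt 3 / 4 := by
  have hs := st18_sq3
  have hsn := Real.sqrt_nonneg 3
  have hs2 := st18_sqrt3_le_two
  have ha4 : a ≤ 1/4 := by linarith
  have h1 : u ≤ a := by nlinarith
  have hw : 0 ≤ Real.sqrt 3 / 4 - a := by nlinarith [st18_one_lt_sqrt3]
  have h2 : v ≤ Real.sqrt 3 / 4 - a := by nlinarith
  linarith

/-- Optimal coupling for the `σx` direction. -/
private def stP1 : Matrix (Fin 4) (Fin 4) ℂ :=
  !![0,0,0,0; 0, 1/4, (Real.sqrt 3:ℂ)/4, 0; 0, (Real.sqrt 3:ℂ)/4, 3/4, 0; 0,0,0,0]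

/-- Optimal coupling for the `σy` direction. -/
private def stP2 : Matrix (Fin 4) (Fin 4) ℂ :=
  !![0,0,0,0; 0, 1/4, -((Real.sqrt 3:ℂ)/4), 0; 0, -((Real.sqrt 3:ℂ)/4), 3/4, 0; 0,0,0,0]

/-- Optimal coupling for the `σz` direction and for the symmetric cost. -/
private def stP3 : Matrix (Fin 4) (Fin 4) ℂ :=
  !![1/4,0,0,1/4; 0,0,0,0; 0,0,1/2,0; 1/4,0,0,1/4]

private lemma stP1_psd : stP1.PosSemidef := by
  have h : stP1 = (!![0, 1/2, (Real.sqrt 3:ℂ)/2, 0; 0,0,0,0; 0,0,0,0; 0,0,0,0])ᴴ *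
      (!![0, 1/2, (Real.sqrt 3:ℂ)/2, 0; 0,0,0,0; 0,0,0,0; 0,0,0,0]) := by
    have h3' : (Real.sqrt 3 : ℂ) ^ 2 = 3 := by rw [sq, st18_sq3']
    ext i j
    fin_cases i <;> fin_cases j <;>
      simp [stP1, Matrix.mul_apply, Fin.sum_univ_four, conjTranspose_apply,
        Complex.conj_ofReal, Matrix.vecHead, Matrix.vecTail, map_div₀, Complex.conj_ofNat] <;>
      ring_nf <;> simp [st18_sq3', h3'] <;> ring_nf <;> norm_num
  rw [h]; exact posSemidef_conjTranspose_mul_self _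

private lemma stP2_psd : stP2.PosSemidef := by
  have h : stP2 = (!![0, 1/2, -((Real.sqrt 3:ℂ)/2), 0; 0,0,0,0; 0,0,0,0; 0,0,0,0])ᴴ *
      (!![0, 1/2, -((Real.sqrt 3:ℂ)/2), 0; 0,0,0,0; 0,0,0,0; 0,0,0,0]) := by
    have h3' : (Real.sqrt 3 : ℂ) ^ 2 = 3 := by rw [sq, st18_sq3']
    ext i j
    fin_cases i <;> fin_cases j <;>
      simp [stP2, Matrix.mul_apply, Fin.sum_univ_four, conjTranspose_apply,
        Complex.conj_ofReal, Matrix.vecHead, Matrix.vecTail, map_div₀, Complex.conj_ofNat] <;>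
      ring_nf <;> simp [st18_sq3', h3'] <;> ring_nf <;> norm_num
  rw [h]; exact posSemidef_conjTranspose_mul_self _

private lemma stP3_psd : stP3.PosSemidef := by
  have h : stP3 = (!![1/2,0,0,1/2; 0,0,1/2,0; 0,0,1/2,0; 0,0,0,0])ᴴ *
      (!![(1/2:ℂ),0,0,1/2; 0,0,1/2,0; 0,0,1/2,0; 0,0,0,0]) := by
    ext i j
    fin_cases i <;> fin_cases j <;>
      simp [stP3, Matrix.mul_apply, Fin.sum_univ_four, conjTranspose_apply,
        Matrix.vecHead, Matrix.vecTail, map_div₀, Complex.conj_ofNat] <;>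
      norm_num
  rw [h]; exact posSemidef_conjTranspose_mul_self _

private lemma stP1_coupling :
    IsCoupling stP1 ((1/2 : ℂ) • ((1 : Matrix (Fin 2) (Fin 2) ℂ) + (1/2 : ℂ) • σz))
                    ((1/2 : ℂ) • ((1 : Matrix (Fin 2) (Fin 2) ℂ) - (1/2 : ℂ) • σz)) := by
  refine ⟨stP1_psd, ?_, ?_, ?_⟩
  · simp [Matrix.trace, Fin.sum_univ_four, stP1, Matrix.diag, Matrix.vecHead, Matrix.vecTail]; norm_num
  · ext i j; fin_cases i <;> fin_cases j <;>
      simp [ptrace2, stP1, σz, Matrix.one_apply, Matrix.vecHead, Matrix.vecTail] <;> norm_num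
  · ext i j; fin_cases i <;> fin_cases j <;>
      simp [ptrace1, stP1, σz, Matrix.one_apply, Matrix.transpose_apply, Matrix.vecHead, Matrix.vecTail] <;> norm_num

private lemma stP2_coupling :
    IsCoupling stP2 ((1/2 : ℂ) • ((1 : Matrix (Fin 2) (Fin 2) ℂ) + (1/2 : ℂ) • σz))
                    ((1/2 : ℂ) • ((1 : Matrix (Fin 2) (Fin 2) ℂ) - (1/2 : ℂ) • σz)) := by
  refine ⟨stP2_psd, ?_, ?_, ?_⟩
  · simp [Matrix.trace, Fin.sum_univ_four, stP2, Matrix.diag, Matrix.vecHead, Matrix.vecTail]; norm_num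
  · ext i j; fin_cases i <;> fin_cases j <;>
      simp [ptrace2, stP2, σz, Matrix.one_apply, Matrix.vecHead, Matrix.vecTail] <;> norm_num
  · ext i j; fin_cases i <;> fin_cases j <;>
      simp [ptrace1, stP2, σz, Matrix.one_apply, Matrix.transpose_apply, Matrix.vecHead, Matrix.vecTail] <;> norm_num

private lemma stP3_coupling :
    IsCoupling stP3 ((1/2 : ℂ) • ((1 : Matrix (Fin 2) (Fin 2) ℂ) + (1/2 : ℂ) • σz))
                    ((1/2 : ℂ) • ((1 : Matrix (Fin 2) (Fin 2) ℂ) - (1/2 : ℂ) • σz)) := by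
  refine ⟨stP3_psd, ?_, ?_, ?_⟩
  · simp [Matrix.trace, Fin.sum_univ_four, stP3, Matrix.diag, Matrix.vecHead, Matrix.vecTail]; norm_num
  · ext i j; fin_cases i <;> fin_cases j <;>
      simp [ptrace2, stP3, σz, Matrix.one_apply, Matrix.vecHead, Matrix.vecTail] <;> norm_num
  · ext i j; fin_cases i <;> fin_cases j <;>
      simp [ptrace1, stP3, σz, Matrix.one_apply, Matrix.transpose_apply, Matrix.vecHead, Matrix.vecTail] <;> norm_num

set_option maxHeartbeats 2000000 in
theorem stmt_18 :
    ∃ p : ℝ, 1 ≤ p ∧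
      ∀ ρ ω : Matrix (Fin 2) (Fin 2) ℂ,
        ρ = (1/2 : ℂ) • ((1 : Matrix (Fin 2) (Fin 2) ℂ) + (1/2 : ℂ) • σz) →
        ω = (1/2 : ℂ) • ((1 : Matrix (Fin 2) (Fin 2) ℂ) - (1/2 : ℂ) • σz) →
        ∀ c₁ c₂ c₃ : Matrix (Fin 4) (Fin 4) ℂ,
          c₁ = (((2:ℝ)^(p-1) : ℝ) : ℂ) • (kron 1 1 - kron σx σxᵀ) →
          c₂ = (((2:ℝ)^(p-1) : ℝ) : ℂ) • (kron 1 1 - kron σy σyᵀ) →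
          c₃ = (((2:ℝ)^(p-1) : ℝ) : ℂ) • (kron 1 1 - kron σz σzᵀ) →
          IsLeast {x : ℝ | ∃ P₁ P₂ P₃ : Matrix (Fin 4) (Fin 4) ℂ,
              IsCoupling P₁ ρ ω ∧ IsCoupling P₂ ρ ω ∧ IsCoupling P₃ ρ ω ∧
              (P₁ * c₁).trace + (P₂ * c₂).trace + (P₃ * c₃).trace = (x : ℂ)}
            ((2:ℝ)^p - ((Real.sqrt 3 - 1)/2) * (2:ℝ)^p) ∧
          IsLeast {x : ℝ | ∃ P : Matrix (Fin 4) (Fin 4) ℂ,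
              IsCoupling P ρ ω ∧ (P * (c₁ + c₂ + c₃)).trace = (x : ℂ)}
            ((2:ℝ)^p) ∧
          (2:ℝ)^p - ((Real.sqrt 3 - 1)/2) * (2:ℝ)^p < (2:ℝ)^p := by
  refine ⟨1, le_refl 1, ?_⟩
  intro ρ ω hρ hω c₁ c₂ c₃ hc₁ hc₂ hc₃
  subst hρ hω
  have e0 : ((2:ℝ)^((1:ℝ)-1)) = 1 := by rw [sub_self, Real.rpow_zero]
  have e1 : ((2:ℝ)^(1:ℝ)) = 2 := Real.rpow_one 2
  rw [e0, Complex.ofReal_one, one_smul] at hc₁ hc₂ hc₃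
  have hK1 : kron 1 1 - kron σx σxᵀ =
      !![1,0,0,-1; 0,1,-1,0; 0,-1,1,0; -1,0,0,1] := by
    ext i j
    fin_cases i <;> fin_cases j <;>
      simp [kron, σx, Matrix.one_apply, Matrix.transpose_apply, Matrix.vecHead, Matrix.vecTail] <;> norm_num
  have hK2 : kron 1 1 - kron σy σyᵀ =
      !![1,0,0,-1; 0,1,1,0; 0,1,1,0; -1,0,0,1] := by
    ext i j
    fin_cases i <;> fin_cases j <;>
      simp [kron, σy, Matrix.one_apply, Matrix.transpose_apply, Complex.I_mul_I, Matrix.vecHead, Matrix.vecTail] <;> norm_num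
  have hK3 : kron 1 1 - kron σz σzᵀ =
      !![0,0,0,0; 0,2,0,0; 0,0,2,0; 0,0,0,0] := by
    ext i j
    fin_cases i <;> fin_cases j <;>
      simp [kron, σz, Matrix.one_apply, Matrix.transpose_apply, Matrix.vecHead, Matrix.vecTail] <;> norm_num
  rw [hK1] at hc₁; rw [hK2] at hc₂; rw [hK3] at hc₃
  subst hc₁ hc₂ hc₃
  rw [e1]
  have hsq3 := st18_sq3
  have hsn := Real.sqrt_nonneg 3
  refine ⟨⟨?_, ?_⟩, ⟨?_, ?_⟩, ?_⟩
  · -- membership, multi-marginal problem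
    refine ⟨stP1, stP2, stP3, stP1_coupling, stP2_coupling, stP3_coupling, ?_⟩
    simp [Matrix.trace, Matrix.mul_apply, Fin.sum_univ_four, Matrix.diag,
      stP1, stP2, stP3, Matrix.vecHead, Matrix.vecTail]
    push_cast
    ring_nf
  · -- lower bound, multi-marginal problem
    rintro x ⟨Q₁, Q₂, Q₃, g₁, g₂, g₃, hsum⟩
    obtain ⟨a1p, b1p, c1p, hab1, hac1, hd1, h30a, h21a, hu1, hv1⟩ := st18_facts g₁
    obtain ⟨a2p, b2p, c2p, hab2, hac2, hd2, h30b, h21b, hu2, hv2⟩ := st18_facts g₂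
    obtain ⟨a3p, b3p, c3p, hab3, hac3, hd3, h30c, h21c, hu3, hv3⟩ := st18_facts g₃
    have hre := congrArg Complex.re hsum
    simp [Matrix.trace, Matrix.mul_apply, Fin.sum_univ_four, Matrix.diag,
      Complex.add_re, Complex.sub_re, Complex.neg_re, Complex.mul_re,
      Complex.ofReal_re] at hre
    have k1 : (Q₁ 0 3).re + (Q₁ 1 2).re ≤ Real.sqrt 3 / 4 := by
      refine st18_key_bound a1p b1p c1p hab1 hac1 ?_ hv1
      calc ((Q₁ 0 3).re)^2 ≤ (Q₁ 0 0).re * (Q₁ 3 3).re := hu1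
        _ = (Q₁ 0 0).re * (Q₁ 0 0).re := by rw [hd1]
    have k2 : (Q₂ 0 3).re + (-(Q₂ 1 2).re) ≤ Real.sqrt 3 / 4 := by
      refine st18_key_bound a2p b2p c2p hab2 hac2 ?_ (by simpa using hv2)
      calc ((Q₂ 0 3).re)^2 ≤ (Q₂ 0 0).re * (Q₂ 3 3).re := hu2
        _ = (Q₂ 0 0).re * (Q₂ 0 0).re := by rw [hd2]
    have k3 : (Q₃ 0 0).re ≤ 1/4 := by linarith
    linarith [hre, k1, k2, k3]
  · -- membership, product problem
    refine ⟨stP3, stP3_coupling, ?_⟩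
    simp [Matrix.trace, Matrix.mul_apply, Fin.sum_univ_four, Matrix.diag, stP3,
      Matrix.add_apply, Matrix.vecHead, Matrix.vecTail]
    push_cast
    ring_nf
  · -- lower bound, product problem
    rintro x ⟨Q, g, hsum⟩
    obtain ⟨ap, bp, cp, hab, hac, hd, h30, h21, hu, hv⟩ := st18_facts g
    have hre := congrArg Complex.re hsum
    simp [Matrix.trace, Matrix.mul_apply, Fin.sum_univ_four, Matrix.diag,
      Complex.add_re, Complex.sub_re, Complex.neg_re, Complex.mul_re,
      Complex.ofReal_re, Matrix.add_apply, Matrix.vecHead, Matrix.vecTail] at hre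
    have hu' : (Q 0 3).re ≤ (Q 0 0).re := by nlinarith
    linarith [hre, hu']
  · linarith [st18_one_lt_sqrt3]
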